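/- (Bound on the center of mass, uniform ball.) Let μ be the uniform probability measure on the closed ball B(0, r) ⊂ ℝ^d. Let S ⊆ ℝ^d be a measurable set with μ(S) > 0, and let c_S := (∫_S x dμ(x)) / μ(S) be its center of mass with respect to μ. Then ‖c_S‖ ≤ r · μ(ℝ^d \ S) / μ(S). -/

import Mathlib

open MeasureTheory Metric Set

noncomputable section

/-- The uniform probability measure on the closed ball `B(0, r)` in `ℝ^d`. -/
def uniformBallMeasure (d : ℕ) (r : ℝ) : Measure (EuclideanSpace ℝ (Fin d)) :=
  (volume (Metric.closedBall (0 : EuclideanSpace ℝ (Fin d)) r))⁻¹ •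
    volume.restrict (Metric.closedBall (0 : EuclideanSpace ℝ (Fin d)) r)

lemma ball_integral_zero (d : ℕ) (r : ℝ) :
    ∫ x in Metric.closedBall (0 : EuclideanSpace ℝ (Fin d)) r, x ∂volume = 0 := by
  set f : EuclideanSpace ℝ (Fin d) → EuclideanSpace ℝ (Fin d) :=
    (Metric.closedBall (0 : EuclideanSpace ℝ (Fin d)) r).indicator id with hf
  have h1 : ∫ x in Metric.closedBall (0 : EuclideanSpace ℝ (Fin d)) r, x ∂volume
      = ∫ x, f x ∂volume := (integral_indicator measurableSet_closedBall).symm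
  have hneg : ∀ x, f (-x) = - f x := by
    intro x
    simp only [hf, indicator]
    by_cases h : x ∈ Metric.closedBall (0 : EuclideanSpace ℝ (Fin d)) r
    · have : -x ∈ Metric.closedBall (0 : EuclideanSpace ℝ (Fin d)) r := by
        simpa [mem_closedBall_zero_iff] using h
      simp [h, this]
    · have : -x ∉ Metric.closedBall (0 : EuclideanSpace ℝ (Fin d)) r := by
        simpa [mem_closedBall_zero_iff] using h
      simp [h, this]
  have h2 : ∫ x, f x ∂volume = - ∫ x, f x ∂volume := by
    conv_lhs => rw [← integral_neg_eq_self f volume]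
    simp_rw [hneg]
    exact integral_neg f
  have h3 : (2:ℝ) • ∫ x, f x ∂volume = 0 := by
    rw [two_smul]; nth_rewrite 2 [h2]; simp
  rw [h1]
  rcases smul_eq_zero.1 h3 with h | h
  · norm_num at h
  · exact h

/-- Bound on the center of mass for the uniform distribution on a ball: if `S` has positive
measure `μ(S)` under the uniform measure `μ` on `B(0, r)`, then its center of mass `c_S`
satisfies `‖c_S‖ ≤ r·μ(ℝ^d \ S)/μ(S)`. -/
theorem center_of_mass_bound_ball (d : ℕ) (hd : 1 ≤ d) (r : ℝ) (hr : 0 < r)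
    (S : Set (EuclideanSpace ℝ (Fin d))) (hS : MeasurableSet S)
    (hpos : 0 < (uniformBallMeasure d r S).toReal) :
    ‖((uniformBallMeasure d r S).toReal)⁻¹ •
        ∫ x in S, x ∂(uniformBallMeasure d r)‖ ≤
      r * (uniformBallMeasure d r Sᶜ).toReal / (uniformBallMeasure d r S).toReal := by
  set B := Metric.closedBall (0 : EuclideanSpace ℝ (Fin d)) r with hB
  set ν := volume.restrict B with hν
  set c : ENNReal := (volume B)⁻¹ with hc
  have hBpos : 0 < volume B := measure_closedBall_pos volume (0:EuclideanSpace ℝ (Fin d)) hr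
  have hBfin : volume B < ⊤ := measure_closedBall_lt_top
  have hcne : c ≠ 0 := by simp [hc, hBfin.ne]
  have hcnetop : c ≠ ⊤ := by simp [hc, hBpos.ne']
  set a : ℝ := c.toReal with ha
  have hapos : 0 < a := ENNReal.toReal_pos hcne hcnetop
  -- integrability of id
  have hint : Integrable (fun x => x) ν :=
    (continuous_id.continuousOn).integrableOn_compact (isCompact_closedBall 0 r)
  -- ae bound
  have hae : ∀ᵐ x ∂ν, ‖x‖ ≤ r := by
    filter_upwards [ae_restrict_mem (measurableSet_closedBall)] with x hx
    exact mem_closedBall_zero_iff.1 hx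
  have hνfin : ∀ T : Set (EuclideanSpace ℝ (Fin d)), ν T ≠ ⊤ := fun T =>
    (lt_of_le_of_lt (measure_mono (subset_univ _)) (by simpa [hν] using hBfin)).ne
  have hcompl : ‖∫ x in Sᶜ, x ∂ν‖ ≤ r * (ν Sᶜ).toReal := by
    have := norm_setIntegral_le_of_norm_le_const_ae (s := Sᶜ) (C := r) (μ := ν)
      (lt_of_le_of_lt (measure_mono (subset_univ _)) (by simpa [hν] using hBfin))
      (ae_restrict_of_ae hae)
    rw [measureReal_def] at this
    simpa [mul_comm] using this
  have hsum : (∫ x in S, x ∂ν) + ∫ x in Sᶜ, x ∂ν = 0 := by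
    rw [integral_add_compl hS hint]
    simpa [hν, hB] using ball_integral_zero d r
  have hkey : ‖∫ x in S, x ∂ν‖ ≤ r * (ν Sᶜ).toReal := by
    have : ∫ x in S, x ∂ν = - ∫ x in Sᶜ, x ∂ν := by
      linear_combination (norm := module) hsum
    rw [this, norm_neg]; exact hcompl
  -- rewrite everything in terms of ν
  have hmeas : ∀ T : Set (EuclideanSpace ℝ (Fin d)),
      (uniformBallMeasure d r T).toReal = a * (ν T).toReal := by
    intro T
    rw [uniformBallMeasure, Measure.smul_apply, smul_eq_mul, ENNReal.toReal_mul]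
  have hinteg : ∫ x in S, x ∂(uniformBallMeasure d r) = a • ∫ x in S, x ∂ν := by
    rw [uniformBallMeasure, Measure.restrict_smul, integral_smul_measure]
  set A := (ν S).toReal with hA
  set B' := (ν Sᶜ).toReal with hB'
  have hApos : 0 < A := by
    have := hpos
    rw [hmeas S] at this
    nlinarith [ENNReal.toReal_nonneg (a := ν S)]
  rw [hmeas S, hmeas Sᶜ, hinteg, smul_smul, norm_smul, Real.norm_eq_abs,
    abs_of_nonneg (by positivity)]
  have e1 : (a * A)⁻¹ * a * ‖∫ x in S, x ∂ν‖ = ‖∫ x in S, x ∂ν‖ / A := by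
    field_simp
  have e2 : r * (a * B') / (a * A) = r * B' / A := by
    field_simp
  rw [e1, e2]
  gcongr
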